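/- arXiv:2502.18677 — 5 statements merged into one kernel-verified Lean document; each statement's English description precedes it below -/
import Mathlib

section
/- The function q₀ defined by q₀(x) = -2 d²/dx² log{1 + a(sin 2x - 2x)} for x < 0 and q₀(x) = 0 for x ≥ 0, with a > 0, satisfies q₀(x) = -4 sin(2x)/x + O(1/x²) as x → -∞. -/
open Real

noncomputable def q0 (a : ℝ) : ℝ → ℝ := fun x =>
  if x < 0 then
    -2 * deriv (deriv (fun y : ℝ => Real.log (1 + a * (Real.sin (2 * y) - 2 * y)))) x
  else 0

lemma D_ge_one (a : ℝ) (ha : 0 < a) (y : ℝ) (hy : y < 0) :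
    1 ≤ 1 + a * (Real.sin (2*y) - 2*y) := by
  have h := Real.sin_lt (x := -(2*y)) (by linarith)
  rw [Real.sin_neg] at h
  nlinarith [h]

lemma hasDerivAt_inner (a : ℝ) (x : ℝ) :
    HasDerivAt (fun y : ℝ => 1 + a * (Real.sin (2*y) - 2*y))
      (a * (2 * Real.cos (2*x) - 2)) x := by
  have h1 : HasDerivAt (fun y : ℝ => Real.sin (2*y)) (2 * Real.cos (2*x)) x := by
    simpa [Function.comp_def, mul_comm] using (Real.hasDerivAt_sin (2*x)).comp x (HasDerivAt.const_mul 2 (hasDerivAt_id x) : HasDerivAt (fun y : ℝ => 2*y) (2*1) x)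
  have h2 : HasDerivAt (fun y : ℝ => 2*y) 2 x := by simpa using (hasDerivAt_id x).const_mul 2
  simpa using ((h1.sub h2).const_mul a).const_add 1

lemma deriv2_eq (a : ℝ) (ha : 0 < a) (x : ℝ) (hx : x < 0) :
    deriv (deriv (fun y : ℝ => Real.log (1 + a * (Real.sin (2 * y) - 2 * y)))) x
      = ((-4*a*Real.sin (2*x)) * (1 + a*(Real.sin (2*x) - 2*x))
          - (a*(2*Real.cos (2*x)-2))^2) / (1 + a*(Real.sin (2*x) - 2*x))^2 := by
  set f : ℝ → ℝ := fun y => Real.log (1 + a * (Real.sin (2 * y) - 2 * y)) with hf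
  set g : ℝ → ℝ := fun y => a * (2 * Real.cos (2*y) - 2) / (1 + a * (Real.sin (2*y) - 2*y)) with hg
  have hDne : ∀ y : ℝ, y < 0 → (1 + a * (Real.sin (2*y) - 2*y)) ≠ 0 := fun y hy =>
    by have := D_ge_one a ha y hy; linarith
  have hderiv : ∀ y : ℝ, y < 0 → deriv f y = g y := by
    intro y hy
    have := ((hasDerivAt_inner a y).log (hDne y hy))
    simpa [hg] using this.deriv
  have heq : deriv f =ᶠ[nhds x] g :=
    Filter.eventuallyEq_of_mem (isOpen_Iio.mem_nhds hx) hderiv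
  rw [heq.deriv_eq]
  -- compute deriv g x
  have hN : HasDerivAt (fun y : ℝ => a * (2 * Real.cos (2*y) - 2)) (-4*a*Real.sin (2*x)) x := by
    have h2 : HasDerivAt (fun y : ℝ => Real.cos (2*y)) (-2 * Real.sin (2*x)) x := by
      have := (Real.hasDerivAt_cos (2*x)).comp x (HasDerivAt.const_mul 2 (hasDerivAt_id x) : HasDerivAt (fun y : ℝ => 2*y) (2*1) x)
      simpa [Function.comp_def, mul_comm] using this
    have := ((h2.const_mul 2).sub_const 2).const_mul a
    exact this.congr_deriv (by ring)
  have hGg : HasDerivAt g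
      (((-4*a*Real.sin (2*x)) * (1 + a*(Real.sin (2*x) - 2*x))
        - (a*(2*Real.cos (2*x)-2)) * (a*(2*Real.cos (2*x)-2))) / (1 + a*(Real.sin (2*x) - 2*x))^2) x :=
    hN.div (hasDerivAt_inner a x) (hDne x hx)
  rw [hGg.deriv]; ring

set_option maxHeartbeats 1000000 in
/-- `q₀(x) = -4 sin(2x)/x + O(1/x²)` as `x → -∞`. -/
theorem q0_asymptotics (a : ℝ) (ha : 0 < a) :
    ∃ C X : ℝ, ∀ x : ℝ, x ≤ X →
      |q0 a x - (-4 * Real.sin (2 * x) / x)| ≤ C / x ^ 2 := by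
  refine ⟨4*(1+a)/a + 32, min ((1-a)/a) (-1), fun x hx => ?_⟩
  have hx1 : x ≤ -1 := le_trans hx (min_le_right _ _)
  have hx0 : x < 0 := lt_of_le_of_lt hx1 (by norm_num)
  have hxa : a * x ≤ 1 - a := by
    have h := le_trans hx (min_le_left _ _)
    calc a * x ≤ a * ((1-a)/a) := by nlinarith
    _ = 1 - a := by field_simp
  set D : ℝ := 1 + a * (Real.sin (2*x) - 2*x) with hD
  have hsin : -1 ≤ Real.sin (2*x) := Real.neg_one_le_sin _
  have hsin' : Real.sin (2*x) ≤ 1 := Real.sin_le_one _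
  have hDlb : -(a*x) ≤ D := by nlinarith
  have hDpos : 0 < D := lt_of_lt_of_le (by nlinarith) hDlb
  have hDne : D ≠ 0 := ne_of_gt hDpos
  have hxne : x ≠ 0 := ne_of_lt hx0
  set N : ℝ := a*(2*Real.cos (2*x)-2) with hN
  have hq : q0 a x = -2 * (((-4*a*Real.sin (2*x)) * D - N^2) / D^2) := by
    rw [q0, if_pos hx0, deriv2_eq a ha x hx0]
  have hsplit : q0 a x - (-4 * Real.sin (2 * x) / x)
      = 4*Real.sin (2*x)*(1 + a*Real.sin (2*x))/(D*x) + 2*N^2/D^2 := by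
    rw [hq]
    field_simp
    rw [hD]
    ring
  rw [hsplit]
  have hane : a ≠ 0 := ne_of_gt ha
  have hx2 : (0:ℝ) < x^2 := by positivity
  have hDabs : a * x^2 ≤ |D * x| := by
    rw [abs_mul, abs_of_pos hDpos, abs_of_neg hx0]; nlinarith
  have hE1 : |4*Real.sin (2*x)*(1 + a*Real.sin (2*x))/(D*x)| ≤ (4*(1+a))/(a*x^2) := by
    rw [abs_div]
    refine div_le_div₀ (by positivity) ?_ (by positivity) hDabs
    have h1 : |1 + a*Real.sin (2*x)| ≤ 1 + a := abs_le.mpr ⟨by nlinarith, by nlinarith⟩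
    have h2 : |Real.sin (2*x)| ≤ 1 := abs_le.mpr ⟨hsin, hsin'⟩
    calc |4*Real.sin (2*x)*(1 + a*Real.sin (2*x))|
        = 4 * |Real.sin (2*x)| * |1 + a*Real.sin (2*x)| := by
          rw [abs_mul, abs_mul]; norm_num
      _ ≤ 4 * 1 * (1+a) := by
          apply mul_le_mul _ h1 (abs_nonneg _) (by positivity)
          nlinarith [abs_nonneg (Real.sin (2*x))]
      _ = 4*(1+a) := by ring
  have hE2 : |2*N^2/D^2| ≤ 32/x^2 := by
    have hcos : -1 ≤ Real.cos (2*x) := Real.neg_one_le_cos _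
    have hcos' : Real.cos (2*x) ≤ 1 := Real.cos_le_one _
    have hnn : 0 ≤ 2*N^2/D^2 := by positivity
    rw [abs_of_nonneg hnn]
    have hc16 : (2*Real.cos (2*x)-2)^2 ≤ 16 := by nlinarith
    have hNb : 2*N^2 ≤ 32*a^2 := by
      rw [hN]
      nlinarith [mul_le_mul_of_nonneg_left hc16 (sq_nonneg a)]
    have hDb : a^2 * x^2 ≤ D^2 := by
      have h0 : (0:ℝ) ≤ -(a*x) := by nlinarith
      calc a^2 * x^2 = (-(a*x)) * (-(a*x)) := by ring
        _ ≤ D * D := mul_self_le_mul_self h0 hDlb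
        _ = D^2 := by ring
    calc 2*N^2/D^2 ≤ 32*a^2/(a^2*x^2) :=
          div_le_div₀ (by positivity) hNb (by positivity) hDb
      _ = 32/x^2 := by rw [mul_comm (a^2) (x^2), ← div_div, mul_div_assoc]; field_simp
  calc |4*Real.sin (2*x)*(1 + a*Real.sin (2*x))/(D*x) + 2*N^2/D^2|
      ≤ |4*Real.sin (2*x)*(1 + a*Real.sin (2*x))/(D*x)| + |2*N^2/D^2| := abs_add_le _ _
    _ ≤ (4*(1+a))/(a*x^2) + 32/x^2 := add_le_add hE1 hE2
    _ = (4*(1+a)/a + 32)/x^2 := by rw [← div_div, ← add_div]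
end

section
/- For a > 0, the function q₀(x) = -2 d²/dx² log{1 + a(sin 2x - 2x)} for x < 0 (and 0 for x ≥ 0) belongs to L²(ℝ) but not to L¹(ℝ). -/
open MeasureTheory

open Real

noncomputable def fa (a : ℝ) (x : ℝ) : ℝ := 1 + a * (Real.sin (2 * x) - 2 * x)

lemma sin_ge_self {t : ℝ} (ht : t ≤ 0) : t ≤ Real.sin t := by
  rcases eq_or_lt_of_le ht with h | h
  · subst h; simp
  · have := Real.sin_lt (show 0 < -t by linarith)
    rw [Real.sin_neg] at this; linarith

lemma fa_ge_one {a x : ℝ} (ha : 0 < a) (hx : x ≤ 0) : 1 ≤ fa a x := by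
  have h := sin_ge_self (show 2 * x ≤ 0 by linarith)
  have : 0 ≤ a * (Real.sin (2 * x) - 2 * x) := by nlinarith
  unfold fa; linarith

lemma fa_pos {a x : ℝ} (ha : 0 < a) (hx : x ≤ 0) : 0 < fa a x :=
  lt_of_lt_of_le one_pos (fa_ge_one ha hx)

lemma fa_hasDerivAt (a x : ℝ) :
    HasDerivAt (fun y => fa a y) (a * (2 * Real.cos (2 * x) - 2)) x := by
  have h1 : HasDerivAt (fun y : ℝ => 2 * y) 2 x := by
    simpa using (hasDerivAt_id x).const_mul 2
  have hs : HasDerivAt (fun y : ℝ => Real.sin (2 * y)) (Real.cos (2 * x) * 2) x :=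
    (Real.hasDerivAt_sin (2 * x)).comp x h1
  have h2 := ((hs.sub h1).const_mul a).const_add 1
  exact h2.congr_deriv (by ring)

lemma fd_hasDerivAt (a x : ℝ) :
    HasDerivAt (fun y => a * (2 * Real.cos (2 * y) - 2)) (-(4 * a * Real.sin (2 * x))) x := by
  have h1 : HasDerivAt (fun y : ℝ => 2 * y) 2 x := by
    simpa using (hasDerivAt_id x).const_mul 2
  have hc : HasDerivAt (fun y : ℝ => Real.cos (2 * y)) (-Real.sin (2 * x) * 2) x :=
    (Real.hasDerivAt_cos (2 * x)).comp x h1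
  have h2 := ((hc.const_mul 2).sub_const 2).const_mul a
  exact h2.congr_deriv (by ring)

lemma q0_eq (a : ℝ) (ha : 0 < a) {x : ℝ} (hx : x < 0) :
    q0 a x = 8 * a * Real.sin (2 * x) / fa a x
      + 2 * (a * (2 * Real.cos (2 * x) - 2))^2 / (fa a x)^2 := by
  have hmem : Set.Iio (0:ℝ) ∈ nhds x := Iio_mem_nhds hx
  have hev : deriv (fun y : ℝ => Real.log (1 + a * (Real.sin (2 * y) - 2 * y)))
      =ᶠ[nhds x] fun y => (a * (2 * Real.cos (2 * y) - 2)) / fa a y := by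
    filter_upwards [hmem] with y hy
    have hpos : 0 < fa a y := fa_pos ha (le_of_lt hy)
    have : HasDerivAt (fun y : ℝ => Real.log (fa a y))
        ((a * (2 * Real.cos (2 * y) - 2)) / fa a y) y :=
      (fa_hasDerivAt a y).log (ne_of_gt hpos)
    exact this.deriv
  have hfx : fa a x ≠ 0 := ne_of_gt (fa_pos ha hx.le)
  have hdd : HasDerivAt (fun y => (a * (2 * Real.cos (2 * y) - 2)) / fa a y)
      ((-(4 * a * Real.sin (2 * x)) * fa a x -
        (a * (2 * Real.cos (2 * x) - 2)) * (a * (2 * Real.cos (2 * x) - 2))) / (fa a x)^2) x :=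
    (fd_hasDerivAt a x).div (fa_hasDerivAt a x) hfx
  have h2 : deriv (deriv (fun y : ℝ => Real.log (1 + a * (Real.sin (2 * y) - 2 * y)))) x
      = (-(4 * a * Real.sin (2 * x)) * fa a x -
        (a * (2 * Real.cos (2 * x) - 2)) * (a * (2 * Real.cos (2 * x) - 2))) / (fa a x)^2 := by
    rw [hev.deriv_eq]; exact hdd.deriv
  unfold q0
  rw [if_pos hx, h2]
  field_simp
  ring

lemma abs_q0_le (a : ℝ) (ha : 0 < a) {x : ℝ} (hx : x < 0) :
    |q0 a x| ≤ 8 * a / fa a x + 32 * a^2 / (fa a x)^2 := by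
  have hpos : 0 < fa a x := fa_pos ha hx.le
  have hpos2 : 0 < (fa a x)^2 := by positivity
  rw [q0_eq a ha hx]
  have h1 : |8 * a * Real.sin (2*x) / fa a x| ≤ 8 * a / fa a x := by
    rw [abs_div, abs_of_pos hpos]
    gcongr
    calc |8 * a * Real.sin (2*x)| = 8 * a * |Real.sin (2*x)| := by
          rw [abs_mul, abs_of_nonneg (by positivity : (0:ℝ) ≤ 8 * a)]
      _ ≤ 8 * a * 1 := by
          have := Real.abs_sin_le_one (2*x)
          nlinarith
      _ = 8 * a := by ring
  have h2 : 2 * (a * (2 * Real.cos (2*x) - 2))^2 / (fa a x)^2 ≤ 32 * a^2 / (fa a x)^2 := by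
    rw [div_le_div_iff_of_pos_right hpos2]
    have h4 : |2 * Real.cos (2*x) - 2| ≤ 4 := by
      have := Real.neg_one_le_cos (2*x)
      have := Real.cos_le_one (2*x)
      rw [abs_le]; constructor <;> linarith
    have h5 : (a * (2 * Real.cos (2*x) - 2))^2 ≤ a^2 * 16 := by
      rw [mul_pow]
      have : (2 * Real.cos (2*x) - 2)^2 ≤ 16 := by
        have := abs_le.1 h4
        nlinarith
      nlinarith [sq_nonneg a]
    nlinarith
  calc |8 * a * Real.sin (2*x) / fa a x + 2 * (a * (2 * Real.cos (2*x) - 2))^2 / (fa a x)^2|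
      ≤ |8 * a * Real.sin (2*x) / fa a x| + |2 * (a * (2 * Real.cos (2*x) - 2))^2 / (fa a x)^2| :=
        abs_add_le _ _
    _ ≤ 8 * a / fa a x + 32 * a^2 / (fa a x)^2 := by
        have h3 : |2 * (a * (2 * Real.cos (2*x) - 2))^2 / (fa a x)^2|
            = 2 * (a * (2 * Real.cos (2*x) - 2))^2 / (fa a x)^2 := by
          apply abs_of_nonneg; positivity
        rw [h3]; exact add_le_add h1 h2

lemma fa_le (a : ℝ) (ha : 0 < a) {x : ℝ} (hx : x ≤ 0) : fa a x ≤ 1 + a + 2 * a * (-x) := by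
  have h1 : Real.sin (2*x) ≤ 1 := Real.sin_le_one _
  unfold fa; nlinarith

lemma fa_ge (a : ℝ) (ha : 0 < a) {x : ℝ} (hx : x ≤ -1) : a * (-x) ≤ fa a x := by
  have h1 : -1 ≤ Real.sin (2*x) := Real.neg_one_le_sin _
  unfold fa; nlinarith

lemma q0_bound_tail (a : ℝ) (ha : 0 < a) {x : ℝ} (hx : x ≤ -1) : |q0 a x| * (-x) ≤ 40 := by
  have hx0 : x < 0 := lt_of_le_of_lt hx (by norm_num)
  have hpos : 0 < fa a x := fa_pos ha hx0.le
  have hge := fa_ge a ha hx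
  have hb := abs_q0_le a ha hx0
  have h1 : (8 * a / fa a x) * (-x) ≤ 8 := by
    rw [div_mul_eq_mul_div, div_le_iff₀ hpos]; nlinarith
  have h2 : (32 * a^2 / (fa a x)^2) * (-x) ≤ 32 := by
    rw [div_mul_eq_mul_div, div_le_iff₀ (by positivity)]
    have hgg : (a * (-x)) * (a * (-x)) ≤ fa a x * fa a x :=
      mul_le_mul hge hge (by nlinarith) hpos.le
    nlinarith
  have hxpos : (0:ℝ) < -x := by linarith
  nlinarith [abs_nonneg (q0 a x)]

lemma q0_bound_near (a : ℝ) (ha : 0 < a) {x : ℝ} (hx : x < 0) :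
    |q0 a x| ≤ 8 * a + 32 * a^2 := by
  have hone : 1 ≤ fa a x := fa_ge_one ha hx.le
  have hb := abs_q0_le a ha hx
  have h1 : 8 * a / fa a x ≤ 8 * a := by
    rw [div_le_iff₀ (by linarith)]; nlinarith
  have h2 : 32 * a^2 / (fa a x)^2 ≤ 32 * a^2 := by
    rw [div_le_iff₀ (by nlinarith)]; nlinarith [sq_nonneg (fa a x - 1)]
  linarith

lemma q0_sq_le (a : ℝ) (ha : 0 < a) (x : ℝ) :
    q0 a x ^ 2 ≤ max (2 * (8 * a + 32 * a^2)^2) 3200 * (1 + x^2)⁻¹ := by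
  set C := max (2 * (8 * a + 32 * a^2)^2) 3200 with hC
  have hC32 : (3200:ℝ) ≤ C := le_max_right _ _
  have hC2 : 2 * (8 * a + 32 * a^2)^2 ≤ C := le_max_left _ _
  have h1x : (0:ℝ) < 1 + x^2 := by positivity
  rw [show C * (1 + x^2)⁻¹ = C / (1 + x^2) by ring, le_div_iff₀ h1x]
  rcases le_or_gt x (-1) with hx | hx
  · have h40 := q0_bound_tail a ha hx
    have h0 : 0 ≤ |q0 a x| := abs_nonneg _
    have hxx : (1:ℝ) ≤ -x := by linarith
    have hts : 0 ≤ |q0 a x| * (-x) := mul_nonneg h0 (by linarith)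
    have hsq : (|q0 a x| * (-x))^2 ≤ 1600 := by nlinarith
    have h1 : q0 a x ^ 2 * x^2 ≤ 1600 := by
      have : (|q0 a x| * (-x))^2 = q0 a x ^2 * x^2 := by
        rw [mul_pow, sq_abs]; ring
      linarith [this ▸ hsq]
    have hx2 : 1 ≤ x^2 := by nlinarith
    have h2 : q0 a x ^2 ≤ q0 a x ^2 * x^2 := by nlinarith [sq_nonneg (q0 a x)]
    nlinarith
  · rcases lt_or_ge x 0 with hx0 | hx0
    · have hb := q0_bound_near a ha hx0
      have h0 : 0 ≤ |q0 a x| := abs_nonneg _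
      have hsq : q0 a x ^2 ≤ (8 * a + 32 * a^2)^2 := by
        nlinarith [sq_abs (q0 a x)]
      have hx2 : x^2 ≤ 1 := by nlinarith
      nlinarith [sq_nonneg (q0 a x)]
    · have : q0 a x = 0 := by unfold q0; rw [if_neg (not_lt.2 hx0)]
      rw [this]
      nlinarith

lemma q0_measurable (a : ℝ) : Measurable (q0 a) := by
  unfold q0
  exact Measurable.ite measurableSet_Iio
    ((measurable_deriv _).const_mul (-2)) measurable_const

lemma q0_memL2 (a : ℝ) (ha : 0 < a) : MemLp (q0 a) 2 (volume : Measure ℝ) := by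
  rw [memLp_two_iff_integrable_sq (q0_measurable a).aestronglyMeasurable]
  set C := max (2 * (8 * a + 32 * a^2)^2) 3200 with hC
  apply Integrable.mono' (integrable_inv_one_add_sq.const_mul C)
    (((q0_measurable a).pow_const 2).aestronglyMeasurable)
  filter_upwards with x
  rw [Real.norm_eq_abs, abs_of_nonneg (sq_nonneg _)]
  exact q0_sq_le a ha x

open Real in
lemma integral_sin_two_mul (c : ℝ) :
    ∫ x in Set.Ioc c (c + π/2), Real.sin (2*x) = (Real.cos (2*c) - Real.cos (2*c + π))/2 := by
  have hle : c ≤ c + π/2 := by linarith [Real.pi_pos]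
  have hF : ∀ x ∈ Set.uIcc c (c + π/2), HasDerivAt (fun y => -Real.cos (2*y)/2) (Real.sin (2*x)) x := by
    intro x _
    have h1 : HasDerivAt (fun y : ℝ => 2 * y) 2 x := by
      simpa using (hasDerivAt_id x).const_mul 2
    have hc : HasDerivAt (fun y : ℝ => Real.cos (2*y)) (-Real.sin (2*x) * 2) x :=
      (Real.hasDerivAt_cos (2*x)).comp x h1
    have h2 := (hc.neg).div_const 2
    exact h2.congr_deriv (by ring)
  have hcont : IntervalIntegrable (fun x => Real.sin (2*x)) volume c (c + π/2) := by
    exact (Real.continuous_sin.comp (continuous_const.mul continuous_id)).intervalIntegrable _ _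
  have := intervalIntegral.integral_eq_sub_of_hasDerivAt hF hcont
  rw [← intervalIntegral.integral_of_le hle, this]
  have : 2 * (c + π/2) = 2*c + π := by ring
  rw [this]; ring

lemma q0_not_integrable (a : ℝ) (ha : 0 < a) : ¬ Integrable (q0 a) (volume : Measure ℝ) := by
  intro h
  have hπ := Real.pi_pos
  set I : ℕ → Set ℝ := fun k => Set.Ioc (-(k+1 : ℝ)*π) (-(k+1 : ℝ)*π + π/2) with hI
  set M : ℕ → ℝ := fun k => 1 + a + 2*a*((k:ℝ)+1)*π with hM
  have hMpos : ∀ k, 0 < M k := by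
    intro k
    have : (0:ℝ) ≤ (k:ℝ) := Nat.cast_nonneg k
    have : 0 < 2*a*((k:ℝ)+1)*π := by positivity
    simp only [hM]; positivity
  have hsub : ∀ k, I k ⊆ Set.Iio (0:ℝ) := by
    intro k x hx
    have h2 : x ≤ -(k+1:ℝ)*π + π/2 := hx.2
    have hk : (0:ℝ) ≤ (k:ℝ) := Nat.cast_nonneg k
    have : -(k+1:ℝ)*π + π/2 ≤ -π + π/2 := by nlinarith
    simp only [Set.mem_Iio]; linarith
  -- sin (2x) is nonneg on I k
  have hsin : ∀ k, ∀ x ∈ I k, 0 ≤ Real.sin (2*x) := by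
    intro k x hx
    have h1 : -(k+1:ℝ)*π < x := hx.1
    have h2 : x ≤ -(k+1:ℝ)*π + π/2 := hx.2
    have hper := Real.sin_add_int_mul_two_pi (2*x) ((k:ℤ)+1)
    have hcast : (((k:ℤ)+1 : ℤ) : ℝ) = (k:ℝ)+1 := by push_cast; ring
    rw [hcast] at hper
    rw [← hper]
    apply Real.sin_nonneg_of_nonneg_of_le_pi <;> nlinarith
  -- fa ≤ M k on I k
  have hfa_le : ∀ k, ∀ x ∈ I k, fa a x ≤ M k := by
    intro k x hx
    have h1 : -(k+1:ℝ)*π < x := hx.1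
    have hx0 : x < 0 := hsub k hx
    have := fa_le a ha hx0.le
    simp only [hM]; nlinarith
  -- pointwise lower bound on I k
  have hpt : ∀ k, ∀ x ∈ I k, 8*a/(M k) * Real.sin (2*x) ≤ ‖q0 a x‖ := by
    intro k x hx
    have hx0 : x < 0 := hsub k hx
    have hfpos : 0 < fa a x := fa_pos ha hx0.le
    have hs := hsin k x hx
    have hle := hfa_le k x hx
    have h1 : 8*a/(M k) * Real.sin (2*x) ≤ 8*a/(fa a x) * Real.sin (2*x) := by
      apply mul_le_mul_of_nonneg_right _ hs
      apply div_le_div_of_nonneg_left (by positivity) hfpos hle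
    have h2 : 8*a/(fa a x) * Real.sin (2*x) ≤ q0 a x := by
      rw [q0_eq a ha hx0]
      have : 0 ≤ 2 * (a * (2 * Real.cos (2*x) - 2))^2 / (fa a x)^2 := by positivity
      have heq : 8*a/(fa a x) * Real.sin (2*x) = 8 * a * Real.sin (2*x) / fa a x := by ring
      linarith [heq]
    have h3 : q0 a x ≤ ‖q0 a x‖ := le_abs_self _
    rw [Real.norm_eq_abs]
    calc 8*a/(M k) * Real.sin (2*x) ≤ q0 a x := le_trans h1 h2
      _ ≤ |q0 a x| := le_abs_self _
  -- the sin integral over I k equals 1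
  have hsinint : ∀ k : ℕ, ∫ x in I k, Real.sin (2*x) = 1 := by
    intro k
    have := integral_sin_two_mul (-(k+1:ℝ)*π)
    rw [hI] at *
    rw [this]
    have hc1 : Real.cos (2 * (-(k+1:ℝ)*π)) = 1 := by
      have := Real.cos_int_mul_two_pi (-((k:ℤ)+1))
      have hcast : ((-((k:ℤ)+1) : ℤ) : ℝ) * (2*π) = 2 * (-(k+1:ℝ)*π) := by push_cast; ring
      rw [hcast] at this; exact this
    rw [hc1, Real.cos_add_pi, hc1]
    norm_num
  -- integral lower bound over each I k
  have hIint : ∀ k : ℕ, 8*a/(M k) ≤ ∫ x in I k, ‖q0 a x‖ := by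
    intro k
    have hmono := setIntegral_mono_on
      (f := fun x => 8*a/(M k) * Real.sin (2*x)) (g := fun x => ‖q0 a x‖)
      (s := I k) (μ := volume)
      ((continuous_const.mul
        (Real.continuous_sin.comp (continuous_const.mul continuous_id))).integrableOn_Ioc)
      (h.norm.integrableOn) measurableSet_Ioc (hpt k)
    rw [integral_const_mul, hsinint k, mul_one] at hmono
    exact hmono
  -- disjointness
  have hdisj : ∀ j k : ℕ, j ≠ k → Disjoint (I j) (I k) := by
    intro j k hjk
    rw [Set.Ioc_disjoint_Ioc]
    rcases lt_or_gt_of_ne hjk with hlt | hlt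
    · have hcast : (j:ℝ) + 1 ≤ (k:ℝ) := by exact_mod_cast hlt
      refine le_trans (min_le_right _ _) (le_trans ?_ (le_max_left _ _))
      nlinarith
    · have hcast : (k:ℝ) + 1 ≤ (j:ℝ) := by exact_mod_cast hlt
      refine le_trans (min_le_left _ _) (le_trans ?_ (le_max_right _ _))
      nlinarith
  -- sum bound
  have hK : ∀ N : ℕ, ∑ k ∈ Finset.range N, 8*a/(M k) ≤ ∫ x, ‖q0 a x‖ := by
    intro N
    have hmeas : ∀ k ∈ Finset.range N, MeasurableSet (I k) := fun k _ => measurableSet_Ioc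
    have hpd : Set.Pairwise ↑(Finset.range N) (Function.onFun Disjoint I) := by
      intro j _ k _ hjk; exact hdisj j k hjk
    have hint : ∀ k ∈ Finset.range N, IntegrableOn (fun x => ‖q0 a x‖) (I k) volume :=
      fun k _ => h.norm.integrableOn
    have hunion := integral_biUnion_finset (Finset.range N) hmeas hpd hint
    calc ∑ k ∈ Finset.range N, 8*a/(M k)
        ≤ ∑ k ∈ Finset.range N, ∫ x in I k, ‖q0 a x‖ :=
          Finset.sum_le_sum (fun k _ => hIint k)
      _ = ∫ x in ⋃ k ∈ Finset.range N, I k, ‖q0 a x‖ := (hunion).symm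
      _ ≤ ∫ x, ‖q0 a x‖ := by
          apply setIntegral_le_integral h.norm
          filter_upwards with x using norm_nonneg _
  -- divergence
  set c : ℝ := 8*a/(1 + a + 2*a*π) with hc
  have hcpos : 0 < c := by
    have : 0 < 1 + a + 2*a*π := by positivity
    positivity
  have hterm : ∀ k : ℕ, c * (1/((k:ℝ)+1)) ≤ 8*a/(M k) := by
    intro k
    have hk1 : (0:ℝ) < (k:ℝ)+1 := by positivity
    have hden : 0 < 1 + a + 2*a*π := by positivity
    have hMle : M k ≤ (1 + a + 2*a*π) * ((k:ℝ)+1) := by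
      simp only [hM]
      have : (1:ℝ) ≤ (k:ℝ)+1 := by simp [Nat.cast_nonneg]
      nlinarith
    have := div_le_div_of_nonneg_left (by positivity : (0:ℝ) ≤ 8*a) (hMpos k) hMle
    calc c * (1/((k:ℝ)+1)) = 8*a/((1 + a + 2*a*π) * ((k:ℝ)+1)) := by
          rw [hc]; field_simp
      _ ≤ 8*a/(M k) := this
  have htend : Filter.Tendsto (fun N => ∑ k ∈ Finset.range N, c * (1/((k:ℝ)+1)))
      Filter.atTop Filter.atTop := by
    have := Real.tendsto_sum_range_one_div_nat_succ_atTop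
    have h2 : (fun N => ∑ k ∈ Finset.range N, c * (1/((k:ℝ)+1)))
        = fun N => c * ∑ k ∈ Finset.range N, (1/((k:ℝ)+1)) := by
      funext N; rw [Finset.mul_sum]
    rw [h2]
    exact this.const_mul_atTop hcpos
  obtain ⟨N, hN⟩ := (htend.eventually_gt_atTop (∫ x, ‖q0 a x‖)).exists
  have : ∑ k ∈ Finset.range N, c * (1/((k:ℝ)+1)) ≤ ∫ x, ‖q0 a x‖ :=
    le_trans (Finset.sum_le_sum fun k _ => hterm k) (hK N)
  linarith

/-- `q₀ ∈ L²(ℝ)` but `q₀ ∉ L¹(ℝ)`. -/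
theorem q0_L2_not_L1 (a : ℝ) (ha : 0 < a) :
    MemLp (q0 a) 2 volume ∧ ¬ Integrable (q0 a) volume :=
  ⟨q0_memL2 a ha, q0_not_integrable a ha⟩
end

section
/- For a > 0 and κ > 0 with κ³ + κ = 2a, the reflection coefficient R(k) = i(κ³+κ)/((k+iκ)(k-k₋)(k-k₊)), with k± = ±√(1+3κ²/4) - iκ/2, satisfies |R(k)| < 1 for all real k ≠ ±1, 0, and |R(±1)| = 1. -/
open Complex

/-- The reflection coefficient satisfies `|R(k)| < 1` for real `k ≠ ±1, 0`
and `|R(±1)| = 1`. -/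
theorem reflection_coefficient_modulus (a κ : ℝ) (ha : 0 < a) (hκ : 0 < κ)
    (hrel : κ ^ 3 + κ = 2 * a)
    (kp km : ℂ)
    (hkp : kp = (Real.sqrt (1 + 3 * κ ^ 2 / 4) : ℂ) - I * κ / 2)
    (hkm : km = -(Real.sqrt (1 + 3 * κ ^ 2 / 4) : ℂ) - I * κ / 2)
    (R : ℝ → ℂ)
    (hR : ∀ k : ℝ, R k =
      I * ((κ : ℂ) ^ 3 + κ) / (((k : ℂ) + I * κ) * ((k : ℂ) - km) * ((k : ℂ) - kp))) :
    (∀ k : ℝ, k ≠ 1 → k ≠ -1 → k ≠ 0 → ‖R k‖ < 1) ∧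
      ‖R 1‖ = 1 ∧ ‖R (-1)‖ = 1 := by
  have h34 : (0:ℝ) ≤ 1 + 3 * κ ^ 2 / 4 := by positivity
  set s : ℝ := Real.sqrt (1 + 3 * κ ^ 2 / 4) with hs
  have hs2 : s ^ 2 = 1 + 3 * κ ^ 2 / 4 := Real.sq_sqrt h34
  have hN : (0:ℝ) < κ ^ 3 + κ := by positivity
  have key : ∀ k : ℝ, Complex.normSq (R k) =
      (κ ^ 3 + κ) ^ 2 / ((κ ^ 3 + κ) ^ 2 + k ^ 2 * (k ^ 2 - 1) ^ 2) := by
    intro k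
    have h1 : Complex.normSq ((κ:ℂ) ^ 3 + κ) = (κ ^ 3 + κ) ^ 2 := by
      simp [Complex.normSq_apply, ← Complex.ofReal_pow]
      ring
    have h2 : Complex.normSq ((k:ℂ) + I * κ) = k ^ 2 + κ ^ 2 := by
      simp [Complex.normSq_apply]
      ring
    have h3 : Complex.normSq ((k:ℂ) - (-(s : ℂ) - I * κ / 2)) =
        (k + s) ^ 2 + (κ / 2) ^ 2 := by
      simp [Complex.normSq_apply]
      ring
    have h4 : Complex.normSq ((k:ℂ) - ((s : ℂ) - I * κ / 2)) =
        (k - s) ^ 2 + (κ / 2) ^ 2 := by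
      simp [Complex.normSq_apply]
      ring
    have hden : (k ^ 2 + κ ^ 2) * ((k + s) ^ 2 + (κ / 2) ^ 2) *
        ((k - s) ^ 2 + (κ / 2) ^ 2) = (κ ^ 3 + κ) ^ 2 + k ^ 2 * (k ^ 2 - 1) ^ 2 := by
      linear_combination ((k ^ 2 + κ ^ 2) * (s ^ 2 + 1 + 3 * κ ^ 2 / 4 + κ ^ 2 / 2
        - 2 * k ^ 2)) * hs2
    rw [hR k, hkp, hkm]
    simp only [map_div₀, map_mul, Complex.normSq_I, one_mul, h1, h2, h3, h4, hden]
  have sq_abs_eq : ∀ k : ℝ, ‖R k‖ ^ 2 =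
      (κ ^ 3 + κ) ^ 2 / ((κ ^ 3 + κ) ^ 2 + k ^ 2 * (k ^ 2 - 1) ^ 2) := by
    intro k
    rw [Complex.sq_norm, key k]
  refine ⟨?_, ?_, ?_⟩
  · intro k hk1 hkm1 hk0
    have hk2 : (0:ℝ) < k ^ 2 * (k ^ 2 - 1) ^ 2 := by
      have hne : k ^ 2 - 1 ≠ 0 := by
        intro h
        have : (k - 1) * (k + 1) = 0 := by linear_combination h
        rcases mul_eq_zero.mp this with h' | h'
        · exact hk1 (by linarith)
        · exact hkm1 (by linarith)
      positivity
    have hd : (0:ℝ) < (κ ^ 3 + κ) ^ 2 + k ^ 2 * (k ^ 2 - 1) ^ 2 := by positivity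
    have hlt : ‖R k‖ ^ 2 < 1 := by
      rw [sq_abs_eq k, div_lt_one hd]
      nlinarith
    nlinarith [norm_nonneg (R k)]
  · have h1 : ‖R 1‖ ^ 2 = 1 := by
      rw [sq_abs_eq 1]
      have hne : ((κ:ℝ) ^ 3 + κ) ^ 2 ≠ 0 := by positivity
      norm_num [hne]
    have h0 := norm_nonneg (R 1)
    have : (‖R 1‖ - 1) * (‖R 1‖ + 1) = 0 := by
      linear_combination h1
    rcases mul_eq_zero.mp this with h' | h'
    · linarith
    · linarith
  · have h1 : ‖R (-1)‖ ^ 2 = 1 := by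
      rw [sq_abs_eq (-1)]
      have hne : ((κ:ℝ) ^ 3 + κ) ^ 2 ≠ 0 := by positivity
      norm_num [hne]
    have h0 := norm_nonneg (R (-1))
    have : (‖R (-1)‖ - 1) * (‖R (-1)‖ + 1) = 0 := by
      linear_combination h1
    rcases mul_eq_zero.mp this with h' | h'
    · linarith
    · linarith
end

section
/- For a > 0 and κ > 0 with κ³ + κ = 2a, the transmission coefficient T(k) = (k³-k)/((k+iκ)(k-k₋)(k-k₊)) with k± = ±√(1+3κ²/4) - iκ/2 satisfies T(1) = 0 and |T'(1)| = 1/a. -/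
open Complex

/-- `T(1) = 0` and `|T'(1)| = 1/a` for the transmission coefficient. -/
theorem transmission_zero_and_derivative (a κ : ℝ) (ha : 0 < a) (hκ : 0 < κ)
    (hrel : κ ^ 3 + κ = 2 * a)
    (kp km : ℂ)
    (hkp : kp = (Real.sqrt (1 + 3 * κ ^ 2 / 4) : ℂ) - I * κ / 2)
    (hkm : km = -(Real.sqrt (1 + 3 * κ ^ 2 / 4) : ℂ) - I * κ / 2)
    (T : ℂ → ℂ)
    (hT : ∀ k : ℂ, T k = (k ^ 3 - k) / ((k + I * κ) * (k - km) * (k - kp))) :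
    T 1 = 0 ∧ ‖deriv T 1‖ = 1 / a := by
  have hs : ((Real.sqrt (1 + 3 * κ ^ 2 / 4) : ℝ) : ℂ) ^ 2 = 1 + 3 * κ ^ 2 / 4 := by
    have h : (0:ℝ) ≤ 1 + 3 * κ ^ 2 / 4 := by positivity
    norm_cast
    rw [Real.sq_sqrt h]
  -- denominator value at 1
  have hD1 : ((1:ℂ) + I * κ) * (1 - km) * (1 - kp) = I * κ * (1 + I * κ) ^ 2 := by
    rw [hkp, hkm]
    linear_combination (-(1 + I * (κ:ℂ))) * hs + (-(3/4) * ((κ:ℂ)^2 + I * κ^3)) * Complex.I_sq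
  have hone : ((1:ℂ) + I * κ) ≠ 0 := by
    intro h
    have := congrArg Complex.im h
    simp at this
    exact hκ.ne' this
  have hκC : (κ : ℂ) ≠ 0 := by exact_mod_cast hκ.ne'
  have hDne : ((1:ℂ) + I * κ) * (1 - km) * (1 - kp) ≠ 0 := by
    rw [hD1]
    exact mul_ne_zero (mul_ne_zero I_ne_zero hκC) (pow_ne_zero _ hone)
  constructor
  · rw [hT 1]; norm_num
  · have hTfun : T = fun k : ℂ => (k ^ 3 - k) / ((k + I * κ) * (k - km) * (k - kp)) :=
      funext hT
    have hN : HasDerivAt (fun k : ℂ => k ^ 3 - k) 2 1 := by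
      have h1 : HasDerivAt (fun k : ℂ => k ^ 3 - k) (3 * 1 ^ 2 - 1) 1 :=
        (hasDerivAt_pow 3 1).sub (hasDerivAt_id 1)
      norm_num at h1; exact h1
    have hf : HasDerivAt (fun k : ℂ => (k + I * κ) * (k - km))
        (1 * ((1:ℂ) - km) + (1 + I * κ) * 1) 1 :=
      ((hasDerivAt_id (1:ℂ)).add_const (I * κ)).mul ((hasDerivAt_id (1:ℂ)).sub_const km)
    have hD : HasDerivAt (fun k : ℂ => (k + I * κ) * (k - km) * (k - kp))
        ((1 * ((1:ℂ) - km) + (1 + I * κ) * 1) * (1 - kp) + ((1 + I * κ) * (1 - km)) * 1) 1 :=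
      hf.mul ((hasDerivAt_id (1:ℂ)).sub_const kp)
    have hdiv := hN.div hD hDne
    have hderiv : deriv T 1 = 2 / (I * κ * (1 + I * κ) ^ 2) := by
      rw [hTfun, show (fun k : ℂ => (k ^ 3 - k) / ((k + I * κ) * (k - km) * (k - kp))) = (fun k : ℂ => k ^ 3 - k) / (fun k : ℂ => (k + I * κ) * (k - km) * (k - kp)) from rfl, hdiv.deriv]
      rw [hD1]
      have h0 : ((1:ℂ) ^ 3 - 1) = 0 := by norm_num
      rw [h0]
      field_simp
      ring
    rw [hderiv]
    rw [norm_div]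
    simp only [norm_mul, norm_pow, Complex.norm_I, Complex.norm_ofNat]
    have habsκ : ‖(κ : ℂ)‖ = κ := by
      rw [Complex.norm_real, Real.norm_eq_abs, abs_of_pos hκ]
    have habs1 : ‖(1 + I * κ : ℂ)‖ ^ 2 = 1 + κ ^ 2 := by
      rw [← Complex.normSq_eq_norm_sq]
      simp [Complex.normSq_apply]
      ring
    rw [habsκ, habs1]
    rw [show (1:ℝ) * κ * (1 + κ^2) = 2 * a by linear_combination hrel]
    rw [div_eq_div_iff (by linarith) ha.ne']
    ring
end

section
/- For a > 0 and κ > 0 with κ³ + κ = 2a, the transmission and reflection coefficients T(k) = (k³-k)/((k+iκ)(k-k₋)(k-k₊)) and R(k) = i(κ³+κ)/((k+iκ)(k-k₋)(k-k₊)) satisfy |T(k)|² + |R(k)|² = 1 for all real k. -/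
open Complex

/-- Unitarity `|T(k)|² + |R(k)|² = 1` for all real `k`. -/
theorem T_R_unitarity (a κ : ℝ) (ha : 0 < a) (hκ : 0 < κ)
    (hrel : κ ^ 3 + κ = 2 * a)
    (kp km : ℂ)
    (hkp : kp = (Real.sqrt (1 + 3 * κ ^ 2 / 4) : ℂ) - I * κ / 2)
    (hkm : km = -(Real.sqrt (1 + 3 * κ ^ 2 / 4) : ℂ) - I * κ / 2)
    (T R : ℝ → ℂ)
    (hT : ∀ k : ℝ, T k =
      ((k : ℂ) ^ 3 - k) / (((k : ℂ) + I * κ) * ((k : ℂ) - km) * ((k : ℂ) - kp)))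
    (hR : ∀ k : ℝ, R k =
      I * ((κ : ℂ) ^ 3 + κ) / (((k : ℂ) + I * κ) * ((k : ℂ) - km) * ((k : ℂ) - kp))) :
    ∀ k : ℝ, ‖T k‖ ^ 2 + ‖R k‖ ^ 2 = 1 := by
  intro k
  set s : ℝ := Real.sqrt (1 + 3 * κ ^ 2 / 4) with hs
  have hs2 : s ^ 2 = 1 + 3 * κ ^ 2 / 4 := Real.sq_sqrt (by positivity)
  have h1 : Complex.normSq ((k : ℂ) + I * κ) = k ^ 2 + κ ^ 2 := by
    simp [Complex.normSq_apply]; ring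
  have h2 : Complex.normSq ((k : ℂ) - km) = (k + s) ^ 2 + (κ / 2) ^ 2 := by
    rw [hkm]; simp [Complex.normSq_apply]; ring
  have h3 : Complex.normSq ((k : ℂ) - kp) = (k - s) ^ 2 + (κ / 2) ^ 2 := by
    rw [hkp]; simp [Complex.normSq_apply]; ring
  have hd1 : ((k : ℂ) + I * κ) ≠ 0 := by
    intro h
    have : Complex.normSq ((k : ℂ) + I * κ) = 0 := by rw [h]; simp
    rw [h1] at this; nlinarith
  have hd2 : ((k : ℂ) - km) ≠ 0 := by
    intro h
    have : Complex.normSq ((k : ℂ) - km) = 0 := by rw [h]; simp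
    rw [h2] at this; nlinarith
  have hd3 : ((k : ℂ) - kp) ≠ 0 := by
    intro h
    have : Complex.normSq ((k : ℂ) - kp) = 0 := by rw [h]; simp
    rw [h3] at this; nlinarith
  have hN1 : Complex.normSq ((k : ℂ) ^ 3 - k) = (k ^ 3 - k) ^ 2 := by
    have : ((k : ℂ) ^ 3 - k) = ((k ^ 3 - k : ℝ) : ℂ) := by push_cast; ring
    rw [this, Complex.normSq_ofReal]; ring
  have hN2 : Complex.normSq I * Complex.normSq ((κ : ℂ) ^ 3 + κ) = (κ ^ 3 + κ) ^ 2 := by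
    have : ((κ : ℂ) ^ 3 + κ) = ((κ ^ 3 + κ : ℝ) : ℂ) := by push_cast; ring
    rw [this, Complex.normSq_I, Complex.normSq_ofReal]; ring
  rw [hT, hR]
  simp only [map_div₀, norm_div, div_pow, Complex.sq_norm, Complex.normSq_mul]
  rw [h1, h2, h3, hN1, hN2]
  have hpos : (k ^ 2 + κ ^ 2) * ((k + s) ^ 2 + (κ / 2) ^ 2) * ((k - s) ^ 2 + (κ / 2) ^ 2) ≠ 0 := by
    positivity
  rw [← add_div, div_eq_one_iff_eq hpos]
  linear_combination (-(k ^ 2 + κ ^ 2) * (s ^ 2 + κ ^ 2 / 2 - 2 * k ^ 2 + 1 + 3 * κ ^ 2 / 4)) * hs2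
end
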